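/- For all f, h, φ ∈ C(Ω), the series Σ_{n=0}^∞ (1/n!) L_f(φ·h^n) converges in the sup norm of C(Ω) and its sum equals L_{f+h}(φ); that is, L_{f+h}(φ) − L_f(φ) = Σ_{n=1}^∞ (1/n!) L_f(φ·h^n). -/

import Mathlib

open MeasureTheory Filter

noncomputable section

namespace Paper

variable {M : Type*} [MetricSpace M]

/-- Prepend one symbol: `ax = (a, x₁, x₂, …)`. -/
def cons (a : M) (x : ℕ → M) : ℕ → M
  | 0 => a
  | n + 1 => x n

/-- Prepend a finite word `a ∈ Mⁿ`. -/
def consW {n : ℕ} (a : Fin n → M) (x : ℕ → M) : ℕ → M :=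
  fun k => if h : k < n then a ⟨k, h⟩ else x (k - n)

/-- The left shift `σ`. -/
def shift (x : ℕ → M) : ℕ → M := fun n => x (n + 1)

/-- Birkhoff sum `Sₙ f = f + f∘σ + … + f∘σ^{n-1}`. -/
def birk (f : (ℕ → M) → ℝ) (n : ℕ) (x : ℕ → M) : ℝ :=
  ∑ i ∈ Finset.range n, f (shift^[i] x)

/-- The metric `d_Ω(x,y) = Σ_{n≥1} 2^{-n} d(xₙ,yₙ)`. -/
def dOmega (x y : ℕ → M) : ℝ :=
  ∑' n : ℕ, (1 / 2 : ℝ) ^ (n + 1) * dist (x n) (y n)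

/-- `dₙ(x,y) = max_{0 ≤ k < n} d_Ω(σᵏx, σᵏy)`. -/
def dN (n : ℕ) (x y : ℕ → M) : ℝ :=
  ⨆ k : Fin n, dOmega (shift^[(k : ℕ)] x) (shift^[(k : ℕ)] y)

/-- The (strong) Walters condition. -/
def Walters (f : (ℕ → M) → ℝ) : Prop :=
  ∀ ε : ℝ, 0 < ε → ∃ η : ℝ, 0 < η ∧ ∀ n : ℕ, 1 ≤ n → ∀ x y : ℕ → M,
    dN n x y ≤ η → |birk f n x - birk f n y| ≤ ε

/-- `C_f(x,y) = sup_{n ≥ 1} sup_{a ∈ Mⁿ} (Sₙf(ax) − Sₙf(ay))`, a value in `(−∞,+∞]`. -/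
def Cf (f : (ℕ → M) → ℝ) (x y : ℕ → M) : EReal :=
  ⨆ n : ℕ, ⨆ a : Fin (n + 1) → M,
    ((birk f (n + 1) (consW a x) - birk f (n + 1) (consW a y) : ℝ) : EReal)

/-- The weak Walters condition. -/
def WeakWalters (f : (ℕ → M) → ℝ) : Prop :=
  ∀ ε : ℝ, 0 < ε → ∃ δ : ℝ, 0 < δ ∧ ∀ x y : ℕ → M,
    dOmega x y ≤ δ → Cf f x y ≤ (ε : EReal)

variable [MeasurableSpace M]

/-- The Ruelle operator `L_f φ(x) = ∫_M e^{f(ax)} φ(ax) dμ(a)`. -/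
def ruelle (μ : Measure M) (f : (ℕ → M) → ℝ) (φ : (ℕ → M) → ℝ) : (ℕ → M) → ℝ :=
  fun x => ∫ a, Real.exp (f (cons a x)) * φ (cons a x) ∂μ

/-- The Ruelle operator with weight `g`: `Lφ(x) = ∫_M g(ax) φ(ax) dμ(a)`. -/
def ruelleG (μ : Measure M) (g : (ℕ → M) → ℝ) (φ : (ℕ → M) → ℝ) : (ℕ → M) → ℝ :=
  fun x => ∫ a, g (cons a x) * φ (cons a x) ∂μ

/-- For all `f, h, φ ∈ C(Ω)`, the series `Σ_{n≥0} (1/n!) L_f(φ·hⁿ)`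
converges in the sup norm of `C(Ω)` and its sum is `L_{f+h}(φ)`; equivalently
`L_{f+h}(φ) − L_f(φ) = Σ_{n≥1} (1/n!) L_f(φ·hⁿ)`.  Here `Lf` and `Lfh` are the Ruelle
operators of `f` and `f + h`, characterized pointwise by the defining integral formula. -/
theorem statement2
    [CompactSpace M] [BorelSpace M]
    (μ : Measure M) [IsProbabilityMeasure μ]
    (f h φ : C(ℕ → M, ℝ))
    (Lf Lfh : C(ℕ → M, ℝ) → C(ℕ → M, ℝ))
    (hLf : ∀ (ψ : C(ℕ → M, ℝ)) (x : ℕ → M),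
      Lf ψ x = ∫ a, Real.exp (f (cons a x)) * ψ (cons a x) ∂μ)
    (hLfh : ∀ (ψ : C(ℕ → M, ℝ)) (x : ℕ → M),
      Lfh ψ x = ∫ a, Real.exp ((f + h) (cons a x)) * ψ (cons a x) ∂μ) :
    HasSum (fun n : ℕ => ((n.factorial : ℝ)⁻¹) • Lf (φ * h ^ n)) (Lfh φ) := by
  classical
  have hcons : ∀ x : ℕ → M, Continuous (fun a : M => cons a x) := by
    intro x
    apply continuous_pi
    intro n
    cases n with
    | zero => exact continuous_id
    | succ n => exact continuous_const
  have hint : ∀ (g : M → ℝ), Continuous g → Integrable g μ := fun g hg =>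
    hg.integrable_of_hasCompactSupport (HasCompactSupport.of_compactSpace g)
  set K : ℝ := Real.exp ‖f‖ with hKdef
  have hK0 : 0 < K := Real.exp_pos _
  have hbound : ∀ (ψ : C(ℕ → M, ℝ)) (x : ℕ → M) (a : M),
      ‖Real.exp (f (cons a x)) * ψ (cons a x)‖ ≤ K * ‖ψ‖ := by
    intro ψ x a
    rw [norm_mul]
    have h1 : ‖Real.exp (f (cons a x))‖ ≤ K := by
      rw [Real.norm_eq_abs, abs_of_pos (Real.exp_pos _), hKdef, Real.exp_le_exp]
      exact (Real.le_norm_self _).trans (f.norm_coe_le_norm _)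
    exact mul_le_mul h1 (ψ.norm_coe_le_norm _) (norm_nonneg _) hK0.le
  have hLf_bound : ∀ ψ : C(ℕ → M, ℝ), ‖Lf ψ‖ ≤ K * ‖ψ‖ := by
    intro ψ
    rw [ContinuousMap.norm_le _ (by positivity)]
    intro x
    rw [hLf]
    have := norm_integral_le_of_norm_le_const (μ := μ)
      (Filter.Eventually.of_forall (hbound ψ x))
    simpa using this
  have hnorm_pow : ∀ n : ℕ, ‖φ * h ^ n‖ ≤ ‖φ‖ * ‖h‖ ^ n := by
    intro n
    refine (norm_mul_le _ _).trans ?_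
    cases n with
    | zero =>
        have h1 : ‖(1 : C(ℕ → M, ℝ))‖ ≤ 1 :=
          (ContinuousMap.norm_le _ zero_le_one).mpr (fun x => by simp)
        simpa using mul_le_mul_of_nonneg_left h1 (norm_nonneg φ)
    | succ n =>
        exact mul_le_mul_of_nonneg_left (norm_pow_le' _ n.succ_pos) (norm_nonneg _)
  have hterm_bound : ∀ n : ℕ, ‖((n.factorial : ℝ)⁻¹) • Lf (φ * h ^ n)‖
      ≤ K * ‖φ‖ * (‖h‖ ^ n / (n.factorial : ℝ)) := by
    intro n
    rw [norm_smul ((n.factorial : ℝ)⁻¹) (Lf (φ * h ^ n)), Real.norm_eq_abs,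
      abs_of_nonneg (by positivity : (0:ℝ) ≤ (n.factorial : ℝ)⁻¹)]
    calc (n.factorial : ℝ)⁻¹ * ‖Lf (φ * h ^ n)‖
        ≤ (n.factorial : ℝ)⁻¹ * (K * (‖φ‖ * ‖h‖ ^ n)) := by
          gcongr
          exact (hLf_bound _).trans (by
            have := hnorm_pow n
            nlinarith [hK0.le])
      _ = K * ‖φ‖ * (‖h‖ ^ n / (n.factorial : ℝ)) := by ring
  have hsummable : Summable (fun n : ℕ => ((n.factorial : ℝ)⁻¹) • Lf (φ * h ^ n)) :=
    Summable.of_norm_bounded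
      ((Real.summable_pow_div_factorial ‖h‖).mul_left (K * ‖φ‖)) hterm_bound
  have key : (∑' n : ℕ, ((n.factorial : ℝ)⁻¹) • Lf (φ * h ^ n)) = Lfh φ := by
    ext x
    have hev : ((∑' n : ℕ, ((n.factorial : ℝ)⁻¹) • Lf (φ * h ^ n)) : C(ℕ → M, ℝ)) x
        = ∑' n : ℕ, ((n.factorial : ℝ)⁻¹) • (Lf (φ * h ^ n)) x := by
      have := (ContinuousMap.evalCLM ℝ x).map_tsum hsummable
      simpa using this
    rw [hev, hLfh]
    set F : ℕ → M → ℝ := fun n a =>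
      ((n.factorial : ℝ)⁻¹) * (Real.exp (f (cons a x)) * ((φ * h ^ n) (cons a x))) with hF
    have hFcont : ∀ n, Continuous (F n) := by
      intro n
      exact continuous_const.mul ((Real.continuous_exp.comp (f.continuous.comp (hcons x))).mul
        ((φ * h ^ n).continuous.comp (hcons x)))
    have hF_int : ∀ n, Integrable (F n) μ := fun n => hint _ (hFcont n)
    have hterm : ∀ n : ℕ, ((n.factorial : ℝ)⁻¹) • (Lf (φ * h ^ n)) x = ∫ a, F n a ∂μ := by
      intro n
      rw [hLf, ← integral_smul]
      simp only [hF, smul_eq_mul]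
    have hF_norm : Summable (fun n => ∫ a, ‖F n a‖ ∂μ) := by
      refine Summable.of_nonneg_of_le
        (fun n => integral_nonneg (fun a => norm_nonneg _)) (fun n => ?_)
        ((Real.summable_pow_div_factorial ‖h‖).mul_left (K * ‖φ‖))
      calc ∫ a, ‖F n a‖ ∂μ
          ≤ ∫ _a : M, (n.factorial : ℝ)⁻¹ * (K * (‖φ‖ * ‖h‖ ^ n)) ∂μ := by
            refine integral_mono (hint _ (hFcont n)).norm (integrable_const _) (fun a => ?_)
            have hb : ‖Real.exp (f (cons a x)) * (φ * h ^ n) (cons a x)‖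
                ≤ K * (‖φ‖ * ‖h‖ ^ n) :=
              (hbound (φ * h ^ n) x a).trans (by nlinarith [hnorm_pow n, hK0.le])
            calc ‖F n a‖
                = (n.factorial : ℝ)⁻¹
                    * ‖Real.exp (f (cons a x)) * (φ * h ^ n) (cons a x)‖ := by
                  simp only [hF, norm_mul, Real.norm_eq_abs,
                    abs_of_nonneg (by positivity : (0:ℝ) ≤ (n.factorial : ℝ)⁻¹), abs_mul]
              _ ≤ (n.factorial : ℝ)⁻¹ * (K * (‖φ‖ * ‖h‖ ^ n)) := by gcongr
        _ = (n.factorial : ℝ)⁻¹ * (K * (‖φ‖ * ‖h‖ ^ n)) := by simp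
        _ = K * ‖φ‖ * (‖h‖ ^ n / (n.factorial : ℝ)) := by ring
    have hswap := integral_tsum_of_summable_integral_norm hF_int hF_norm
    have hptsum : ∀ a : M, (∑' n, F n a)
        = Real.exp ((f + h) (cons a x)) * φ (cons a x) := by
      intro a
      have hexp : HasSum (fun n : ℕ => ((n.factorial : ℝ)⁻¹) • (h (cons a x)) ^ n)
          (NormedSpace.exp (h (cons a x))) := NormedSpace.exp_series_hasSum_exp' _
      have hfun : (fun n : ℕ => F n a) = fun n : ℕ =>
          Real.exp (f (cons a x)) * φ (cons a x) * ((n.factorial : ℝ)⁻¹ • h (cons a x) ^ n) := by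
        funext n
        simp only [hF, smul_eq_mul, ContinuousMap.mul_apply, ContinuousMap.pow_apply]
        ring
      have hexp' : HasSum (fun n : ℕ => F n a)
          ((Real.exp (f (cons a x)) * φ (cons a x)) * NormedSpace.exp (h (cons a x))) := by
        rw [hfun]
        exact hexp.mul_left _
      rw [hexp'.tsum_eq, ← Real.exp_eq_exp_ℝ]
      simp only [ContinuousMap.add_apply, Real.exp_add]
      ring
    rw [funext hterm, hswap]
    refine integral_congr_ae (Filter.Eventually.of_forall (fun a => ?_))
    show (∑' n, F n a) = _
    exact hptsum a
  have hfin := hsummable.hasSum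
  rwa [key] at hfin

end Paper
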